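/- For every connected graph G on n \ge 2s vertices (s a positive integer), the conditional diameter satisfies D(G; s) \le n - 2s + 1. -/
import Mathlib


open SimpleGraph Finset

/-- Wiener index: sum of distances over unordered pairs. -/
noncomputable def wiener {V : Type*} [Fintype V] (G : SimpleGraph V) : ℕ :=
  (∑ u : V, ∑ v : V, G.dist u v) / 2

/-- Sum of distances from a vertex. -/
noncomputable def distSum {V : Type*} [Fintype V] (G : SimpleGraph V) (u : V) : ℕ :=
  ∑ v : V, G.dist u v

/-- Distance between two vertex subsets. -/
noncomputable def setDist {V : Type*} (G : SimpleGraph V) (A B : Finset V) : ℕ :=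
  sInf {d | ∃ x ∈ A, ∃ y ∈ B, G.dist x y = d}

/-- Conditional diameter `D(G; s)`. -/
noncomputable def condDiam {V : Type*} (G : SimpleGraph V) (s : ℕ) : ℕ :=
  sSup {d | ∃ A B : Finset V, A.card = s ∧ B.card = s ∧ setDist G A B = d}

/-- `T^i_n` (1-based `i`): path `x_1 … x_{n-1}` (vertices `0,…,n-2`) with a pendant
vertex (vertex `n-1`) attached to `x_i` (vertex `i-1`). -/
def Tpend (n i : ℕ) : SimpleGraph (Fin n) :=
  SimpleGraph.fromRel (fun u v =>
    (u.val + 1 = v.val ∧ v.val ≤ n - 2) ∨ (u.val = i - 1 ∧ v.val = n - 1))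

/-- `T^{i,j}_n` (1-based): path `x_1 … x_{n-2}` (vertices `0,…,n-3`) with pendant
vertices `n-2` attached to `x_i` and `n-1` attached to `x_j`. -/
def Tpend2 (n i j : ℕ) : SimpleGraph (Fin n) :=
  SimpleGraph.fromRel (fun u v =>
    (u.val + 1 = v.val ∧ v.val ≤ n - 3) ∨ (u.val = i - 1 ∧ v.val = n - 2) ∨
      (u.val = j - 1 ∧ v.val = n - 1))

/-- `T^{i(2)}_n` (1-based): path `x_1 … x_{n-2}` with a pendant path `x_i - w_1 - w_2`
(`w_1 = n-2`, `w_2 = n-1`). -/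
def TpendPath2 (n i : ℕ) : SimpleGraph (Fin n) :=
  SimpleGraph.fromRel (fun u v =>
    (u.val + 1 = v.val ∧ v.val ≤ n - 3) ∨ (u.val = i - 1 ∧ v.val = n - 2) ∨
      (u.val = n - 2 ∧ v.val = n - 1))

theorem stmt7 {V : Type*} [Fintype V] (G : SimpleGraph V) (hG : G.Connected)
    (n s : ℕ) (hcard : Fintype.card V = n) (hs : 1 ≤ s) (hn : 2 * s ≤ n) :
    condDiam G s ≤ n - 2 * s + 1 := by
  classical
  apply csSup_le'
  rintro d ⟨A, B, hA, hB, rfl⟩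
  -- the set of distances is nonempty
  obtain ⟨a0, ha0⟩ : A.Nonempty := Finset.card_pos.mp (by omega)
  obtain ⟨b0, hb0⟩ : B.Nonempty := Finset.card_pos.mp (by omega)
  have hne : {d | ∃ x ∈ A, ∃ y ∈ B, G.dist x y = d}.Nonempty :=
    ⟨G.dist a0 b0, a0, ha0, b0, hb0, rfl⟩
  obtain ⟨a, ha, b, hb, hab⟩ := Nat.sInf_mem hne
  have hmin : ∀ x ∈ A, ∀ y ∈ B, setDist G A B ≤ G.dist x y := by
    intro x hx y hy
    exact Nat.sInf_le ⟨x, hx, y, hy, rfl⟩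
  set d := setDist G A B with hd
  rcases Nat.eq_zero_or_pos d with h0 | hdpos
  · omega
  -- get a shortest path
  obtain ⟨p, hp, hlen⟩ := (hG a b).exists_path_of_dist
  have hlen' : p.length = d := hlen.trans hab
  clear hlen
  -- interior vertices avoid A and B except at endpoints
  have hkey : ∀ v ∈ p.support, v ∈ A ∪ B → v = a ∨ v = b := by
    intro v hv hvAB
    have hsplit : (p.takeUntil v hv).length + (p.dropUntil v hv).length = d := by
      have := congr_arg SimpleGraph.Walk.length (p.take_spec hv)
      rwa [SimpleGraph.Walk.length_append, hlen'] at this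
    have h1 : G.dist a v ≤ (p.takeUntil v hv).length := SimpleGraph.dist_le _
    have h2 : G.dist v b ≤ (p.dropUntil v hv).length := SimpleGraph.dist_le _
    rcases Finset.mem_union.mp hvAB with hvA | hvB
    · left
      have := hmin v hvA b hb
      have hz : G.dist a v = 0 := by omega
      exact ((hG.dist_eq_zero_iff).mp hz).symm
    · right
      have := hmin a ha v hvB
      have hz : G.dist v b = 0 := by omega
      exact (hG.dist_eq_zero_iff).mp hz
  -- counting
  set S := p.support.toFinset with hS
  have hScard : S.card = d + 1 := by
    rw [hS, List.toFinset_card_of_nodup hp.support_nodup,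
      SimpleGraph.Walk.length_support, hlen']
  have hABdisj : Disjoint A B := by
    rw [Finset.disjoint_left]
    intro x hxA hxB
    have := hmin x hxA x hxB
    simp [SimpleGraph.dist_self] at this
    omega
  have hinter : S ∩ (A ∪ B) ⊆ {a, b} := by
    intro v hv
    rw [Finset.mem_inter] at hv
    have := hkey v (by simpa [hS] using hv.1) hv.2
    simp [Finset.mem_insert]
    tauto
  have h3 : (S ∩ (A ∪ B)).card ≤ 2 :=
    le_trans (Finset.card_le_card hinter) (Finset.card_insert_le _ _ |>.trans (by simp))
  have h4 : (S ∪ (A ∪ B)).card ≤ n := by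
    rw [← hcard]; exact Finset.card_le_univ _
  have h5 : (S ∪ (A ∪ B)).card + (S ∩ (A ∪ B)).card = S.card + (A ∪ B).card :=
    Finset.card_union_add_card_inter _ _
  have h6 : (A ∪ B).card = 2 * s := by
    rw [Finset.card_union_of_disjoint hABdisj, hA, hB]; omega
  omega
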